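/- Every coloring of the edges of the complete bipartite graph K_{29,29} with 5 colors contains a monochromatic cycle C_4; equivalently, r_2(C_4,5) ≤ 29. -/

import Mathlib

set_option maxHeartbeats 1000000


/-- The complete multipartite graph with `p` parts, each of size `n`:
vertices are pairs `(part, index)`, adjacent iff they lie in different parts. -/
def completeMultipartite (p n : ℕ) : SimpleGraph (Fin p × Fin n) where
  Adj v w := v.1 ≠ w.1
  symm := by first | exact fun _ _ h => Ne.symm h | exact ⟨fun _ _ h => Ne.symm h⟩
  loopless := ⟨fun _ h => h rfl⟩

instance (p n : ℕ) : DecidableRel (completeMultipartite p n).Adj :=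
  fun v w => inferInstanceAs (Decidable (v.1 ≠ w.1))

/-- The edge coloring `c` contains a monochromatic cycle `C₄` in the graph `G`. -/
def HasMonoC4 {V : Type*} (G : SimpleGraph V) {k : ℕ} (c : Sym2 V → Fin k) : Prop :=
  ∃ v₁ v₂ v₃ v₄ : V,
    v₁ ≠ v₂ ∧ v₁ ≠ v₃ ∧ v₁ ≠ v₄ ∧ v₂ ≠ v₃ ∧ v₂ ≠ v₄ ∧ v₃ ≠ v₄ ∧
    G.Adj v₁ v₂ ∧ G.Adj v₂ v₃ ∧ G.Adj v₃ v₄ ∧ G.Adj v₄ v₁ ∧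
    c s(v₁, v₂) = c s(v₂, v₃) ∧ c s(v₂, v₃) = c s(v₃, v₄) ∧ c s(v₃, v₄) = c s(v₄, v₁)

/-- The `p`-partite Ramsey number `r_p(C₄, k)`: the least positive `n` such that every
`k`-coloring of the edges of `K_n^p` contains a monochromatic `C₄`. -/
noncomputable def multipartiteRamsey (p k : ℕ) : ℕ :=
  sInf {n : ℕ | 0 < n ∧
    ∀ c : Sym2 (Fin p × Fin n) → Fin k, HasMonoC4 (completeMultipartite p n) c}

lemma quad_bound (d : ℕ) : 10 * d ≤ (d * d - d) + 30 := by
  have hdd : d ≤ d * d := by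
    rcases Nat.eq_zero_or_pos d with h0 | h0
    · simp [h0]
    · exact Nat.le_mul_of_pos_left d h0
  rcases le_or_gt d 5 with h | h
  · interval_cases d <;> norm_num
  · have h11 : 11 * d ≤ d * d + 30 := by nlinarith
    omega

private lemma main_lemma : ∀ c : Sym2 (Fin 2 × Fin 29) → Fin 5, HasMonoC4 (completeMultipartite 2 29) c := by
  intro c
  set f : Fin 29 × Fin 29 → Fin 5 := fun p => c s(((0 : Fin 2), p.1), ((1 : Fin 2), p.2)) with hf
  obtain ⟨k, -, hk⟩ := Finset.exists_lt_card_fiber_of_mul_lt_card_of_maps_to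
    (s := (Finset.univ : Finset (Fin 29 × Fin 29))) (t := Finset.univ) (f := f) (n := 168)
    (fun a _ => Finset.mem_univ _) (by simp)
  set R : Fin 29 → Finset (Fin 29) := fun i => Finset.univ.filter (fun j => f (i, j) = k) with hR
  have hk' : 168 < (Finset.univ.filter (fun p => f p = k)).card := hk
  have hsum : (Finset.univ.filter (fun p => f p = k)).card = ∑ i, (R i).card := by
    rw [Finset.card_eq_sum_card_fiberwise (f := Prod.fst) (t := Finset.univ)
      (fun x _ => Finset.mem_univ _)]
    refine Finset.sum_congr rfl fun i _ => ?_
    rw [Finset.filter_filter]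
    have himg : ((Finset.univ.filter (fun p : Fin 29 × Fin 29 => f p = k ∧ p.1 = i)).image
        Prod.snd) = R i := by
      ext j
      simp only [Finset.mem_image, Finset.mem_filter, Finset.mem_univ, true_and, hR]
      constructor
      · rintro ⟨⟨a, b⟩, ⟨h1, rfl⟩, rfl⟩; exact h1
      · intro h; exact ⟨(i, j), ⟨h, rfl⟩, rfl⟩
    rw [← himg, Finset.card_image_of_injOn]
    intro p hp q hq hpq
    have hp' := (Finset.mem_filter.mp hp).2.2
    have hq' := (Finset.mem_filter.mp hq).2.2
    exact Prod.ext (hp'.trans hq'.symm) hpq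
  have hS : 169 ≤ ∑ i, (R i).card := by rw [← hsum]; omega
  -- per-row quadratic bound
  have hrow : ∀ i, 10 * (R i).card ≤ ((R i).offDiag).card + 30 := by
    intro i
    rw [Finset.offDiag_card]
    exact quad_bound _
  have key : (Finset.univ.offDiag : Finset (Fin 29 × Fin 29)).card <
      (Finset.univ.sigma (fun i => (R i).offDiag)).card := by
    rw [Finset.card_sigma]
    have h1 : (Finset.univ.offDiag : Finset (Fin 29 × Fin 29)).card = 812 := by
      rw [Finset.offDiag_card]; simp
    have h2 : ∑ i, (10 * (R i).card) ≤ ∑ i, (((R i).offDiag).card + 30) :=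
      Finset.sum_le_sum fun i _ => hrow i
    rw [Finset.sum_add_distrib, Finset.sum_const, ← Finset.mul_sum] at h2
    simp only [Finset.card_univ, Fintype.card_fin, smul_eq_mul] at h2
    omega
  obtain ⟨a, ha, b, hb, hab, heq⟩ :=
    Finset.exists_ne_map_eq_of_card_lt_of_maps_to key
      (f := fun x : (_ : Fin 29) × (Fin 29 × Fin 29) => x.2)
      (fun x hx => by
        simp only [Finset.mem_coe, Finset.mem_sigma, Finset.mem_univ, true_and] at hx
        have := Finset.mem_offDiag.mp hx
        exact Finset.mem_offDiag.mpr ⟨Finset.mem_univ _, Finset.mem_univ _, this.2.2⟩)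
  simp only [Finset.mem_sigma, Finset.mem_univ, true_and] at ha hb
  obtain ⟨i, j, j'⟩ := a
  obtain ⟨i', j₂, j₂'⟩ := b
  simp only at heq
  obtain ⟨hj, hj'⟩ : j = j₂ ∧ j' = j₂' :=
    ⟨congrArg Prod.fst heq, congrArg Prod.snd heq⟩
  subst hj; subst hj'
  have hii' : i ≠ i' := fun h => hab (by subst h; rfl)
  rw [Finset.mem_offDiag] at ha hb
  obtain ⟨haj, haj', hjj'⟩ := ha
  obtain ⟨hbj, hbj', -⟩ := hb
  simp only [hR, Finset.mem_filter, Finset.mem_univ, true_and] at haj haj' hbj hbj'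
  refine ⟨((0 : Fin 2), i), ((1 : Fin 2), j), ((0 : Fin 2), i'), ((1 : Fin 2), j'), ?_, ?_, ?_, ?_, ?_, ?_, ?_, ?_, ?_, ?_, ?_, ?_, ?_⟩
  · exact fun h => by simp [Prod.ext_iff] at h
  · exact fun h => hii' (congrArg Prod.snd h)
  · exact fun h => by simp [Prod.ext_iff] at h
  · exact fun h => by simp [Prod.ext_iff] at h
  · exact fun h => hjj' (congrArg Prod.snd h)
  · exact fun h => by simp [Prod.ext_iff] at h
  · exact (by decide : (0 : Fin 2) ≠ 1)
  · exact (by decide : (1 : Fin 2) ≠ 0)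
  · exact (by decide : (0 : Fin 2) ≠ 1)
  · exact (by decide : (1 : Fin 2) ≠ 0)
  · show c s(((0:Fin 2), i), ((1:Fin 2), j)) = c s(((1:Fin 2), j), ((0:Fin 2), i'))
    rw [Sym2.eq_swap (a := ((1:Fin 2), j))]
    exact haj.trans hbj.symm
  · show c s(((1:Fin 2), j), ((0:Fin 2), i')) = c s(((0:Fin 2), i'), ((1:Fin 2), j'))
    rw [Sym2.eq_swap (a := ((1:Fin 2), j))]
    exact hbj.trans hbj'.symm
  · show c s(((0:Fin 2), i'), ((1:Fin 2), j')) = c s(((1:Fin 2), j'), ((0:Fin 2), i))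
    rw [Sym2.eq_swap (a := ((1:Fin 2), j'))]
    exact hbj'.trans haj'.symm

/-- Every 5-coloring of the edges of the complete bipartite graph `K_{29,29}` contains a
monochromatic `C₄`; equivalently, `r₂(C₄, 5) ≤ 29`. -/
theorem bipartiteRamsey_five_colors_le :
    (∀ c : Sym2 (Fin 2 × Fin 29) → Fin 5, HasMonoC4 (completeMultipartite 2 29) c) ∧
      multipartiteRamsey 2 5 ≤ 29 :=
  ⟨main_lemma, Nat.sInf_le ⟨by norm_num, main_lemma⟩⟩
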